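/- Let M be a nonnegative p×p matrix with spectral radius 1, positive right 1-eigenvector r and positive left 1-eigenvector l normalized so lr = 1, and suppose M = x_0 ∑_j y_0^j A_{s_0+j} for positive reals x_0, y_0 and 0-1 matrices A_{s_0+j}. Define the stochastic matrix Π_{jk} = M_{jk} r_k / r_j and stationary vector q_j = l_j r_j. Then the entropy h(μ_Π) = −∑_{j,k} q_j Π_{jk} ln Π_{jk} satisfies h(μ_Π) = −ln(x_0) − (l·Ã·r)·ln(y_0), where Ã = ∑_j j x_0 y_0^j A_{s_0+j}. -/

import Mathlib

open Matrix

/-- let `M = x₀ • ∑ j, y₀^j • A_j` be a nonnegative matrix of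
spectral radius `1` built from 0-1 matrices `A_j` with disjoint supports, with
positive right/left `1`-eigenvectors `r`, `l` normalized by `l ⬝ᵥ r = 1`.  For
the stochastic matrix `Π_{jk} = M_{jk} r_k / r_j` and stationary vector
`q_j = l_j r_j`, the entropy `h(μ_Π) = -∑ q_j Π_{jk} ln Π_{jk}` equals
`-ln x₀ - (l Ã r) ln y₀`, where `Ã = ∑ j, (j x₀ y₀^j) • A_j`.
(In Lean, `Real.log 0 = 0`, so vanishing terms are handled automatically.) -/
theorem entropy_of_markov_measure
    {p ρ : ℕ} (x₀ y₀ : ℝ) (hx₀ : 0 < x₀) (hy₀ : 0 < y₀)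
    (As : Fin (ρ + 1) → Matrix (Fin p) (Fin p) ℝ)
    (h01 : ∀ j i k, As j i k = 0 ∨ As j i k = 1)
    (hdisj : ∀ j j' i k, As j i k = 1 → As j' i k = 1 → j = j')
    (M : Matrix (Fin p) (Fin p) ℝ)
    (hM : M = x₀ • ∑ j : Fin (ρ + 1), y₀ ^ (j : ℕ) • As j)
    (hspec : ∀ μ ∈ spectrum ℂ (M.map (algebraMap ℝ ℂ)), ‖μ‖ ≤ 1)
    (r l : Fin p → ℝ) (hr : ∀ j, 0 < r j) (hl : ∀ j, 0 < l j)
    (hMr : M.mulVec r = r) (hlM : Matrix.vecMul l M = l)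
    (hlr : l ⬝ᵥ r = 1) :
    -(∑ j, ∑ k, (l j * r j) * (M j k * r k / r j) * Real.log (M j k * r k / r j))
      = - Real.log x₀
        - (l ⬝ᵥ (∑ j : Fin (ρ + 1), (((j : ℕ) : ℝ) * x₀ * y₀ ^ (j : ℕ)) • As j).mulVec r)
          * Real.log y₀ := by
  classical
  set Atil : Matrix (Fin p) (Fin p) ℝ :=
    ∑ j : Fin (ρ + 1), (((j : ℕ) : ℝ) * x₀ * y₀ ^ (j : ℕ)) • As j with hAtil
  have key : ∀ i k, (M i k = 0 ∧ Atil i k = 0) ∨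
      ∃ n : Fin (ρ+1), M i k = x₀ * y₀ ^ (n:ℕ) ∧ Atil i k = (n:ℕ) * (x₀ * y₀ ^ (n:ℕ)) := by
    intro i k
    by_cases h : ∀ n, As n i k = 0
    · left
      constructor
      · simp [hM, Matrix.sum_apply, h]
      · simp [hAtil, Matrix.sum_apply, h]
    · right
      push_neg at h
      obtain ⟨n, hn⟩ := h
      have hn1 : As n i k = 1 := (h01 n i k).resolve_left hn
      have hz : ∀ m, m ≠ n → As m i k = 0 := by
        intro m hm
        rcases h01 m i k with h0 | h1
        · exact h0
        · exact absurd (hdisj m n i k h1 hn1) hm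
      refine ⟨n, ?_, ?_⟩
      · rw [hM]
        simp only [Matrix.smul_apply, Matrix.sum_apply, smul_eq_mul]
        rw [Finset.sum_eq_single n]
        · rw [hn1]; ring
        · intro m _ hm; rw [hz m hm]; ring
        · simp
      · simp only [hAtil, Matrix.sum_apply, Matrix.smul_apply, smul_eq_mul]
        rw [Finset.sum_eq_single n]
        · rw [hn1]; ring
        · intro m _ hm; rw [hz m hm]; ring
        · simp
  have point : ∀ i k,
      (l i * r i) * (M i k * r k / r i) * Real.log (M i k * r k / r i)
        = l i * M i k * r k * Real.log x₀
          + l i * Atil i k * r k * Real.log y₀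
          + l i * M i k * r k * (Real.log (r k) - Real.log (r i)) := by
    intro i k
    rcases key i k with ⟨hM0, hA0⟩ | ⟨n, hMn, hAn⟩
    · simp [hM0, hA0]
    · have hri := hr i
      have hrk := hr k
      have hMpos : 0 < M i k := by rw [hMn]; positivity
      have hlog : Real.log (M i k * r k / r i)
          = Real.log x₀ + (n:ℕ) * Real.log y₀ + (Real.log (r k) - Real.log (r i)) := by
        rw [Real.log_div (by positivity) (ne_of_gt hri),
            Real.log_mul (ne_of_gt hMpos) (ne_of_gt hrk), hMn,
            Real.log_mul (ne_of_gt hx₀) (by positivity),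
            Real.log_pow]
        push_cast
        ring
      rw [hlog, hAn, hMn]
      field_simp
  have hMr' : ∀ i, ∑ k, M i k * r k = r i := by
    intro i
    simpa [Matrix.mulVec, dotProduct] using congrFun hMr i
  have hlM' : ∀ k, ∑ i, l i * M i k = l k := by
    intro k
    simpa [Matrix.vecMul, dotProduct] using congrFun hlM k
  have hlr' : ∑ i, l i * r i = 1 := by simpa [dotProduct] using hlr
  have e1 : ∑ i, ∑ k, l i * M i k * r k * Real.log x₀ = Real.log x₀ := by
    calc ∑ i, ∑ k, l i * M i k * r k * Real.log x₀
        = ∑ i, (l i * (∑ k, M i k * r k)) * Real.log x₀ := by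
          refine Finset.sum_congr rfl fun i _ => ?_
          rw [Finset.mul_sum, Finset.sum_mul]
          exact Finset.sum_congr rfl fun k _ => by ring
      _ = ∑ i, l i * r i * Real.log x₀ := by
          refine Finset.sum_congr rfl fun i _ => by rw [hMr' i]
      _ = Real.log x₀ := by rw [← Finset.sum_mul, hlr', one_mul]
  have e2 : ∑ i, ∑ k, l i * Atil i k * r k * Real.log y₀
      = (l ⬝ᵥ Atil.mulVec r) * Real.log y₀ := by
    rw [show l ⬝ᵥ Atil.mulVec r = ∑ i, l i * ∑ k, Atil i k * r k by
      simp [dotProduct, Matrix.mulVec]]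
    rw [Finset.sum_mul]
    refine Finset.sum_congr rfl fun i _ => ?_
    rw [Finset.mul_sum, Finset.sum_mul]
    exact Finset.sum_congr rfl fun k _ => by ring
  have e3 : ∑ i, ∑ k, l i * M i k * r k * (Real.log (r k) - Real.log (r i)) = 0 := by
    have hsplit : ∀ i k, l i * M i k * r k * (Real.log (r k) - Real.log (r i))
        = l i * M i k * r k * Real.log (r k) - l i * M i k * r k * Real.log (r i) := by
      intro i k; ring
    simp only [hsplit, Finset.sum_sub_distrib]
    have ha : ∑ i, ∑ k, l i * M i k * r k * Real.log (r k)
        = ∑ k, l k * r k * Real.log (r k) := by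
      rw [Finset.sum_comm]
      refine Finset.sum_congr rfl fun k _ => ?_
      calc ∑ i, l i * M i k * r k * Real.log (r k)
          = (∑ i, l i * M i k) * (r k * Real.log (r k)) := by
            rw [Finset.sum_mul]
            exact Finset.sum_congr rfl fun i _ => by ring
        _ = l k * r k * Real.log (r k) := by rw [hlM' k]; ring
    have hb : ∑ i, ∑ k, l i * M i k * r k * Real.log (r i)
        = ∑ i, l i * r i * Real.log (r i) := by
      refine Finset.sum_congr rfl fun i _ => ?_
      calc ∑ k, l i * M i k * r k * Real.log (r i)
          = (∑ k, M i k * r k) * (l i * Real.log (r i)) := by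
            rw [Finset.sum_mul]
            exact Finset.sum_congr rfl fun k _ => by ring
        _ = l i * r i * Real.log (r i) := by rw [hMr' i]; ring
    rw [ha, hb, sub_self]
  calc -(∑ j, ∑ k, (l j * r j) * (M j k * r k / r j) * Real.log (M j k * r k / r j))
      = -(∑ i, ∑ k, (l i * M i k * r k * Real.log x₀
          + l i * Atil i k * r k * Real.log y₀
          + l i * M i k * r k * (Real.log (r k) - Real.log (r i)))) := by
        refine congrArg Neg.neg (Finset.sum_congr rfl fun i _ =>
          Finset.sum_congr rfl fun k _ => point i k)
    _ = -(Real.log x₀ + (l ⬝ᵥ Atil.mulVec r) * Real.log y₀ + 0) := by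
        simp only [Finset.sum_add_distrib, e1, e2, e3]
    _ = - Real.log x₀ - (l ⬝ᵥ Atil.mulVec r) * Real.log y₀ := by ring
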